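/- The map σ(x) = x/(Bx,x), defined on {x ∈ ℝ^{n+1} : (Bx,x) ≠ 0}, is an involution (σ∘σ = id), fixes the quadric (Bx,x) = 1 pointwise, and is an isometry of the conformally flat metric ds₁² = (Bdx,dx)/|Bx|²; explicitly, if y = σ(x) then (Bdy,dy)/|By|² = (Bdx,dx)/|Bx|² as quadratic forms on tangent vectors. -/

import Mathlib

/-- The map σ(x) = x/(Bx,x) is an involution, fixes the quadric (Bx,x)=1
pointwise, and is an isometry of the conformally flat metric
ds₁² = (Bdx,dx)/|Bx|². -/
theorem sigma_involution_isometry (n : ℕ) (b : Fin (n+1) → ℝ) (hb : ∀ i, b i ≠ 0) :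
    (∀ x : Fin (n+1) → ℝ, (∑ i, b i * x i * x i) ≠ 0 →
      (fun i => (x i / (∑ j, b j * x j * x j)) /
        (∑ j, b j * (x j / (∑ l, b l * x l * x l)) * (x j / (∑ l, b l * x l * x l))))
        = x) ∧
    (∀ x : Fin (n+1) → ℝ, (∑ i, b i * x i * x i) = 1 →
      (fun i => x i / (∑ j, b j * x j * x j)) = x) ∧
    (∀ (x v : Fin (n+1) → ℝ), (∑ i, b i * x i * x i) ≠ 0 →
      (∑ i, b i * (v i / (∑ j, b j * x j * x j) -
          2 * x i * (∑ j, b j * x j * v j) / (∑ j, b j * x j * x j)^2)^2) /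
        (∑ i, (b i * (x i / (∑ j, b j * x j * x j)))^2) =
      (∑ i, b i * (v i)^2) / (∑ i, (b i * x i)^2)) := by
  refine ⟨?_, ?_, ?_⟩
  · intro x hQ
    set Q := ∑ i, b i * x i * x i with hQdef
    have h1 : (∑ j, b j * (x j / Q) * (x j / Q)) = 1 / Q := by
      have : ∀ j ∈ Finset.univ, b j * (x j / Q) * (x j / Q)
          = (b j * x j * x j) / Q ^ 2 := by
        intro j _
        rw [eq_div_iff (pow_ne_zero 2 hQ)]
        field_simp
      rw [Finset.sum_congr rfl this, ← Finset.sum_div, ← hQdef]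
      field_simp
    funext i
    simp only [← hQdef, h1]
    field_simp
  · intro x hQ
    funext i
    simp only [hQ, div_one]
  · intro x v hQ
    set Q := ∑ i, b i * x i * x i with hQdef
    set S := ∑ i, b i * x i * v i with hSdef
    have hQ2 : Q ^ 2 ≠ 0 := pow_ne_zero 2 hQ
    have hQ4 : Q ^ 4 ≠ 0 := pow_ne_zero 4 hQ
    -- x is nonzero
    have hx : ∃ i, x i ≠ 0 := by
      by_contra h
      push_neg at h
      apply hQ
      rw [hQdef]
      refine Finset.sum_eq_zero fun i _ => by rw [h i]; ring
    obtain ⟨i₀, hi₀⟩ := hx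
    have hD' : (∑ i, (b i * x i) ^ 2) > 0 := by
      apply Finset.sum_pos' (fun i _ => sq_nonneg _)
      exact ⟨i₀, Finset.mem_univ i₀, by have := hb i₀; positivity⟩
    -- denominator identity
    have hden : (∑ i, (b i * (x i / Q)) ^ 2) = (∑ i, (b i * x i) ^ 2) / Q ^ 2 := by
      rw [Finset.sum_div]
      refine Finset.sum_congr rfl fun i _ => by
        rw [eq_div_iff hQ2]; field_simp
    -- numerator identity
    have hnum : (∑ i, b i * (v i / Q - 2 * x i * S / Q ^ 2) ^ 2)
        = (∑ i, b i * v i ^ 2) / Q ^ 2 := by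
      have key : (∑ i, b i * (v i / Q - 2 * x i * S / Q ^ 2) ^ 2) * Q ^ 4
          = (∑ i, b i * v i ^ 2) * Q ^ 2 := by
        rw [Finset.sum_mul]
        have step : ∀ i ∈ Finset.univ, b i * (v i / Q - 2 * x i * S / Q ^ 2) ^ 2 * Q ^ 4
            = (b i * v i ^ 2) * Q ^ 2 - 4 * (b i * x i * v i) * S * Q
              + 4 * (b i * x i * x i) * S ^ 2 := by
          intro i _; field_simp; ring
        rw [Finset.sum_congr rfl step]
        rw [Finset.sum_add_distrib, Finset.sum_sub_distrib]
        simp only [← Finset.sum_mul, ← Finset.mul_sum]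
        rw [← hSdef, ← hQdef]
        ring
      rw [eq_div_iff hQ2]
      exact mul_right_cancel₀ hQ2 (by linear_combination key)
    rw [hnum, hden]
    have hD'ne : (∑ i, (b i * x i) ^ 2) ≠ 0 := hD'.ne'
    field_simp
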